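/- Let x be a generalised Oxtoby sequence with respect to a period structure (p_l). Then for every l ∈ ℕ and every k ∈ ℤ, the interval [k p_l, (k+1) p_l − 1] contains at least 2^l elements of Aper(p_l, x). -/

import Mathlib

/-- The set of positions of x that are not q-periodic. -/
def AperSet {A : Type*} (x : ℤ → A) (q : ℕ) : Set ℤ :=
  {j : ℤ | ¬ ∀ n : ℤ, x (j + n * (q : ℤ)) = x j}

lemma aper_shift {A : Type*} (x : ℤ → A) (q : ℕ) (t j : ℤ) :
    j + t * q ∈ AperSet x q ↔ j ∈ AperSet x q := by
  unfold AperSet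
  simp only [Set.mem_setOf_eq, not_iff_not]
  constructor
  · intro h n
    have h1 := h (-t)
    have e1 : j + t * q + (-t) * q = j := by ring
    rw [e1] at h1
    have h2 := h (n - t)
    have e2 : j + t * q + (n - t) * q = j + n * q := by ring
    rw [e2] at h2
    rw [h2, ← h1]
  · intro h n
    have e2 : j + t * q + n * q = j + (t + n) * q := by ring
    rw [e2, h (t + n), ← h t]

lemma ncard_aper_shift {A : Type*} (x : ℤ → A) (q : ℕ) (t a b : ℤ) :
    (AperSet x q ∩ Set.Ico (a + t * q) (b + t * q)).ncard
      = (AperSet x q ∩ Set.Ico a b).ncard := by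
  have himg : AperSet x q ∩ Set.Ico (a + t * q) (b + t * q)
      = (fun j => j + t * q) '' (AperSet x q ∩ Set.Ico a b) := by
    ext j
    simp only [Set.mem_image, Set.mem_inter_iff, Set.mem_Ico]
    constructor
    · rintro ⟨hA, h1, h2⟩
      refine ⟨j - t * q, ⟨?_, by omega, by omega⟩, by ring⟩
      have e : j - t * q + t * q = j := by ring
      exact (aper_shift x q t (j - t * q)).mp (by rw [e]; exact hA)
    · rintro ⟨i, ⟨hA, h1, h2⟩, rfl⟩
      exact ⟨(aper_shift x q t i).mpr hA, by omega, by omega⟩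
  rw [himg, Set.ncard_image_of_injective _ (fun u v h => by simpa using h)]

lemma aper_finite {A : Type*} (x : ℤ → A) (q : ℕ) (a b : ℤ) :
    (AperSet x q ∩ Set.Ico a b).Finite :=
  (Set.finite_Ico a b).inter_of_right _

theorem oxtoby_holes_lower_bound
    {A : Type*} [Fintype A] (x : ℤ → A) (p : ℕ → ℕ)
    (hp0 : p 0 = 1) (hpos : ∀ l, 0 < p l) (hdvd : ∀ l, p l ∣ p (l + 1))
    (hcover : ∀ j : ℤ, ∃ l, ∀ n : ℤ, x (j + n * (p l : ℤ)) = x j)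
    (hox1 : ∀ l : ℕ, ∀ k : ℕ, k < p (l + 1) / p l →
      AperSet x (p (l + 1)) ∩ Set.Ico ((k : ℤ) * (p l : ℤ)) (((k : ℤ) + 1) * (p l : ℤ)) = ∅ ∨
      AperSet x (p (l + 1)) ∩ Set.Ico ((k : ℤ) * (p l : ℤ)) (((k : ℤ) + 1) * (p l : ℤ)) =
        AperSet x (p l) ∩ Set.Ico ((k : ℤ) * (p l : ℤ)) (((k : ℤ) + 1) * (p l : ℤ)))
    (hox2 : ∀ l : ℕ, ∃ k₁ k₂ : ℕ, k₁ < p (l + 1) / p l ∧ k₂ < p (l + 1) / p l ∧ k₁ ≠ k₂ ∧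
      (AperSet x (p (l + 1)) ∩
        Set.Ico ((k₁ : ℤ) * (p l : ℤ)) (((k₁ : ℤ) + 1) * (p l : ℤ))).Nonempty ∧
      (AperSet x (p (l + 1)) ∩
        Set.Ico ((k₂ : ℤ) * (p l : ℤ)) (((k₂ : ℤ) + 1) * (p l : ℤ))).Nonempty) :
    ∀ l : ℕ, 1 ≤ l → ∀ k : ℤ,
      2 ^ l ≤ (AperSet x (p l) ∩ Set.Ico (k * (p l : ℤ)) ((k + 1) * (p l : ℤ))).ncard := by
  have hred : ∀ (q : ℕ) (k : ℤ),
      (AperSet x q ∩ Set.Ico (k * (q : ℤ)) ((k + 1) * (q : ℤ))).ncard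
        = (AperSet x q ∩ Set.Ico 0 (q : ℤ)).ncard := by
    intro q k
    have e1 : k * (q : ℤ) = 0 + k * q := by ring
    have e2 : (k + 1) * (q : ℤ) = (q : ℤ) + k * q := by ring
    rw [e1, e2, ncard_aper_shift]
  intro l
  induction l with
  | zero => intro h; omega
  | succ l ih =>
    intro _ k
    rw [hred]
    obtain ⟨k₁, k₂, hk₁, hk₂, hne, hne1, hne2⟩ := hox2 l
    -- each nonempty sub-block contributes at least 2^l holes of Aper(p (l+1))
    have key : ∀ k' : ℕ, k' < p (l + 1) / p l →
        (AperSet x (p (l + 1)) ∩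
          Set.Ico ((k' : ℤ) * (p l : ℤ)) (((k' : ℤ) + 1) * (p l : ℤ))).Nonempty →
        2 ^ l ≤ (AperSet x (p (l + 1)) ∩
          Set.Ico ((k' : ℤ) * (p l : ℤ)) (((k' : ℤ) + 1) * (p l : ℤ))).ncard := by
      intro k' hk' hne'
      rcases Nat.eq_zero_or_pos l with rfl | hl1
      · simpa using Nat.succ_le_of_lt ((Set.ncard_pos (aper_finite x _ _ _)).mpr hne')
      · rcases hox1 l k' hk' with hE | hEq
        · rw [hE] at hne'; exact absurd hne' (by simp)
        · rw [hEq]; exact ih hl1 (k' : ℤ)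
    have h1 := key k₁ hk₁ hne1
    have h2 := key k₂ hk₂ hne2
    set q := p (l + 1) with hq
    set P := (p l : ℤ) with hP
    have hPpos : 0 < P := by rw [hP]; exact_mod_cast hpos l
    set B₁ := AperSet x q ∩ Set.Ico ((k₁ : ℤ) * P) (((k₁ : ℤ) + 1) * P) with hB1
    set B₂ := AperSet x q ∩ Set.Ico ((k₂ : ℤ) * P) (((k₂ : ℤ) + 1) * P) with hB2
    have hdisj : Disjoint B₁ B₂ := by
      rw [Set.disjoint_left]
      rintro j ⟨_, hj1, hj2⟩ ⟨_, hj3, hj4⟩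
      rcases lt_or_gt_of_ne hne with h | h
      · have : ((k₁ : ℤ) + 1) * P ≤ (k₂ : ℤ) * P :=
          mul_le_mul_of_nonneg_right (by exact_mod_cast h) hPpos.le
        omega
      · have : ((k₂ : ℤ) + 1) * P ≤ (k₁ : ℤ) * P :=
          mul_le_mul_of_nonneg_right (by exact_mod_cast h) hPpos.le
        omega
    have hsub : B₁ ∪ B₂ ⊆ AperSet x q ∩ Set.Ico 0 (q : ℤ) := by
      have hbound : ∀ k' : ℕ, k' < q / p l →
          Set.Ico ((k' : ℤ) * P) (((k' : ℤ) + 1) * P) ⊆ Set.Ico 0 (q : ℤ) := by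
        intro k' hk' j hj
        rw [Set.mem_Ico] at hj ⊢
        have hmul : (k' + 1) * p l ≤ q := by
          calc (k' + 1) * p l ≤ (q / p l) * p l :=
                Nat.mul_le_mul_right _ (by omega)
            _ = q := Nat.div_mul_cancel (hdvd l)
        have hmul' : ((k' : ℤ) + 1) * P ≤ (q : ℤ) := by
          rw [hP]; exact_mod_cast hmul
        have h0 : (0 : ℤ) ≤ (k' : ℤ) * P := mul_nonneg (by positivity) hPpos.le
        omega
      rintro j (⟨hA, hj⟩ | ⟨hA, hj⟩)
      · exact ⟨hA, hbound k₁ hk₁ hj⟩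
      · exact ⟨hA, hbound k₂ hk₂ hj⟩
    have hfin1 : B₁.Finite := aper_finite x q _ _
    have hfin2 : B₂.Finite := aper_finite x q _ _
    calc (2 : ℕ) ^ (l + 1) = 2 ^ l + 2 ^ l := by ring
      _ ≤ B₁.ncard + B₂.ncard := Nat.add_le_add h1 h2
      _ = (B₁ ∪ B₂).ncard := (Set.ncard_union_eq hdisj hfin1 hfin2).symm
      _ ≤ (AperSet x q ∩ Set.Ico 0 (q : ℤ)).ncard :=
          Set.ncard_le_ncard hsub (aper_finite x q _ _)
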